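/- Let γ_{jR}, γ_{jL}, γ_{lR}, γ_{lL} ≥ 0, τ_j, τ_l ∈ ℝ, t ∈ ℝ, Δt > 0, and let 1_I be the indicator function of I = [t, t+Δt]. With C_j = C[γ_{jR},τ_j], C_l = C[γ_{lR},τ_l], D_j = D[γ_{jL},τ_j], D_l = D[γ_{lL},τ_l], one has ⟨C_j 1_I, C_l 1_I⟩ = √(γ_{jR}γ_{lR})·max(Δt − |τ_j − τ_l|, 0) and ⟨D_j 1_I, D_l 1_I⟩ = √(γ_{jL}γ_{lL})·max(Δt − |τ_j − τ_l|, 0). In particular, for j = l these equal γ_{jR}·Δt and γ_{jL}·Δt respectively, and they vanish when |τ_j − τ_l| > Δt. (This is the rigorous form of the paper's Theorem 2, the non-Markovian Itô rules dC_in^{(j)}·dC_in^{(l)†} and dD_in^{(j)}·dD_in^{(l)†} for atoms coupled to an infinite waveguide.) -/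

import Mathlib

open MeasureTheory ComplexConjugate

/-- The L² pairing ⟨f,g⟩ = ∫ conj(f t) · g t dt. -/
noncomputable def pairL2 (f g : ℝ → ℂ) : ℂ := ∫ t : ℝ, conj (f t) * g t

/-- Smeared right-propagating channel of an infinite waveguide:
`(C[γ,τ] f)(t) = √γ·f(t+τ)`. -/
noncomputable def Cchan (γ τ : ℝ) (f : ℝ → ℂ) : ℝ → ℂ :=
  fun t => (Real.sqrt γ : ℂ) * f (t + τ)

/-- Smeared left-propagating channel of an infinite waveguide:
`(D[γ,τ] f)(t) = √γ·f(t−τ)`. -/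
noncomputable def Dchan (γ τ : ℝ) (f : ℝ → ℂ) : ℝ → ℂ :=
  fun t => (Real.sqrt γ : ℂ) * f (t - τ)

lemma pairC (γ1 γ2 : ℝ) (h1 : 0 ≤ γ1) (τ1 τ2 t Δt : ℝ) :
    pairL2 (Cchan γ1 τ1 (Set.indicator (Set.Icc t (t + Δt)) fun _ => (1 : ℂ)))
           (Cchan γ2 τ2 (Set.indicator (Set.Icc t (t + Δt)) fun _ => (1 : ℂ))) =
      ((Real.sqrt (γ1 * γ2) * max (Δt - |τ1 - τ2|) 0 : ℝ) : ℂ) := by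
  unfold pairL2 Cchan
  have hind : ∀ (τ x : ℝ), (Set.Icc t (t + Δt)).indicator (fun _ => (1 : ℂ)) (x + τ)
      = (Set.Icc (t - τ) (t + Δt - τ)).indicator (fun _ => (1 : ℂ)) x := by
    intro τ x
    have hmem : x + τ ∈ Set.Icc t (t + Δt) ↔ x ∈ Set.Icc (t - τ) (t + Δt - τ) := by
      simp only [Set.mem_Icc]
      constructor <;> intro h <;> constructor <;> linarith [h.1, h.2]
    simp only [Set.indicator_apply, hmem]
  have hintg : ∀ x : ℝ,
      conj ((Real.sqrt γ1 : ℂ) * (Set.Icc t (t + Δt)).indicator (fun _ => (1 : ℂ)) (x + τ1))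
        * ((Real.sqrt γ2 : ℂ) * (Set.Icc t (t + Δt)).indicator (fun _ => (1 : ℂ)) (x + τ2))
      = (Set.Icc (t - τ1) (t + Δt - τ1) ∩ Set.Icc (t - τ2) (t + Δt - τ2)).indicator
          (fun _ => ((Real.sqrt γ1 * Real.sqrt γ2 : ℝ) : ℂ)) x := by
    intro x
    rw [hind τ1 x, hind τ2 x]
    by_cases hA : x ∈ Set.Icc (t - τ1) (t + Δt - τ1) <;>
      by_cases hB : x ∈ Set.Icc (t - τ2) (t + Δt - τ2) <;>
      simp [Set.indicator_apply, hA, hB, Set.mem_inter_iff, map_mul, Complex.conj_ofReal]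
  rw [MeasureTheory.integral_congr_ae (Filter.Eventually.of_forall hintg)]
  rw [MeasureTheory.integral_indicator_const _
    ((measurableSet_Icc).inter (measurableSet_Icc))]
  rw [Set.Icc_inter_Icc, Real.volume_real_Icc]
  have hval : (t + Δt - τ1) ⊓ (t + Δt - τ2) - (t - τ1) ⊔ (t - τ2) = Δt - |τ1 - τ2| := by
    rcases le_total τ1 τ2 with h | h
    · rw [abs_of_nonpos (by linarith), min_eq_right (by linarith),
        max_eq_left (by linarith)]; ring
    · rw [abs_of_nonneg (by linarith), min_eq_left (by linarith),
        max_eq_right (by linarith)]; ring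
  rw [hval, Complex.real_smul, Real.sqrt_mul h1]
  push_cast
  ring

lemma Dchan_eq (γ τ : ℝ) (f : ℝ → ℂ) : Dchan γ τ f = Cchan γ (-τ) f := by
  funext x
  simp [Dchan, Cchan, sub_eq_add_neg]

/-- Theorem 2 (non-Markovian Itô rule, infinite waveguide): pairing the right- and
left-propagating channels against the indicator of `[t, t+Δt]` gives
`√(γ_{jR}γ_{lR})·max(Δt − |τ_j − τ_l|, 0)` and `√(γ_{jL}γ_{lL})·max(Δt − |τ_j − τ_l|, 0)`;
in particular they equal `γ_{jR}·Δt` and `γ_{jL}·Δt` on the diagonal, and vanish when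
`|τ_j − τ_l| > Δt`. -/
theorem stmt_9 (γjR γjL γlR γlL : ℝ)
    (hjR : 0 ≤ γjR) (hjL : 0 ≤ γjL) (hlR : 0 ≤ γlR) (hlL : 0 ≤ γlL)
    (τj τl t Δt : ℝ) (hΔt : 0 < Δt) :
    pairL2 (Cchan γjR τj (Set.indicator (Set.Icc t (t + Δt)) fun _ => (1 : ℂ)))
           (Cchan γlR τl (Set.indicator (Set.Icc t (t + Δt)) fun _ => (1 : ℂ))) =
      ((Real.sqrt (γjR * γlR) * max (Δt - |τj - τl|) 0 : ℝ) : ℂ) ∧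
    pairL2 (Dchan γjL τj (Set.indicator (Set.Icc t (t + Δt)) fun _ => (1 : ℂ)))
           (Dchan γlL τl (Set.indicator (Set.Icc t (t + Δt)) fun _ => (1 : ℂ))) =
      ((Real.sqrt (γjL * γlL) * max (Δt - |τj - τl|) 0 : ℝ) : ℂ) ∧
    pairL2 (Cchan γjR τj (Set.indicator (Set.Icc t (t + Δt)) fun _ => (1 : ℂ)))
           (Cchan γjR τj (Set.indicator (Set.Icc t (t + Δt)) fun _ => (1 : ℂ))) =
      ((γjR * Δt : ℝ) : ℂ) ∧
    pairL2 (Dchan γjL τj (Set.indicator (Set.Icc t (t + Δt)) fun _ => (1 : ℂ)))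
           (Dchan γjL τj (Set.indicator (Set.Icc t (t + Δt)) fun _ => (1 : ℂ))) =
      ((γjL * Δt : ℝ) : ℂ) ∧
    (|τj - τl| > Δt →
      pairL2 (Cchan γjR τj (Set.indicator (Set.Icc t (t + Δt)) fun _ => (1 : ℂ)))
             (Cchan γlR τl (Set.indicator (Set.Icc t (t + Δt)) fun _ => (1 : ℂ))) = 0 ∧
      pairL2 (Dchan γjL τj (Set.indicator (Set.Icc t (t + Δt)) fun _ => (1 : ℂ)))
             (Dchan γlL τl (Set.indicator (Set.Icc t (t + Δt)) fun _ => (1 : ℂ))) = 0) := by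
  have hC := pairC γjR γlR hjR τj τl t Δt
  have hCj := pairC γjR γjR hjR τj τj t Δt
  have habs : |(-τj) - (-τl)| = |τj - τl| := by rw [abs_sub_comm]; ring_nf
  have hD : pairL2 (Dchan γjL τj (Set.indicator (Set.Icc t (t + Δt)) fun _ => (1 : ℂ)))
           (Dchan γlL τl (Set.indicator (Set.Icc t (t + Δt)) fun _ => (1 : ℂ))) =
      ((Real.sqrt (γjL * γlL) * max (Δt - |τj - τl|) 0 : ℝ) : ℂ) := by
    rw [Dchan_eq, Dchan_eq, pairC γjL γlL hjL (-τj) (-τl) t Δt, habs]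
  have hDj : pairL2 (Dchan γjL τj (Set.indicator (Set.Icc t (t + Δt)) fun _ => (1 : ℂ)))
           (Dchan γjL τj (Set.indicator (Set.Icc t (t + Δt)) fun _ => (1 : ℂ))) =
      ((Real.sqrt (γjL * γjL) * max (Δt - |(-τj) - (-τj)|) 0 : ℝ) : ℂ) := by
    rw [Dchan_eq, pairC γjL γjL hjL (-τj) (-τj) t Δt]
  have hdiag : ∀ γ : ℝ, 0 ≤ γ → Real.sqrt (γ * γ) * max (Δt - |τj - τj|) 0 = γ * Δt := by
    intro γ hγ
    rw [Real.sqrt_mul_self hγ, sub_self, abs_zero, sub_zero, max_eq_left hΔt.le]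
  refine ⟨hC, hD, ?_, ?_, ?_⟩
  · rw [hCj, hdiag γjR hjR]
  · rw [hDj]; norm_num [Real.sqrt_mul_self hjL, max_eq_left hΔt.le]
  · intro hgt
    have hmax : max (Δt - |τj - τl|) 0 = 0 := max_eq_right (by linarith)
    constructor
    · rw [hC, hmax]; simp
    · rw [hD, hmax]; simp
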